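/- Let $0<\alpha<1$ and $p=2/(2-\alpha)$. There exist $C<\infty$ and $\gamma\in(0,1)$ such that for every measurable set $E\subseteq\mathbb{R}$ of finite measure, $\int_{\mathbb{R}}\int_{\mathbb{R}}\frac{\chi_E(x)\chi_E(y)}{|x-y|^{\alpha}}\,dx\,dy \leq C\,|E|^{2/p}\left(\sup_{I}\frac{|E\cap I|}{|E|+|I|}\right)^{\gamma}$, where the supremum ranges over all compact intervals $I\subseteq\mathbb{R}$. -/

import Mathlib

open MeasureTheory Set ENNReal

lemma core_int (α : ℝ) (hα1 : α < 1) (a : ℝ) (ha : 0 ≤ a) :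
    ∫⁻ t in Icc (0:ℝ) a, ENNReal.ofReal (|t| ^ (-α)) ≤
      ENNReal.ofReal (a ^ (1 - α) / (1 - α)) := by
  have h1 : (volume : Measure ℝ).restrict (Icc (0:ℝ) a)
      = (volume : Measure ℝ).restrict (Ioc (0:ℝ) a) :=
    (Measure.restrict_congr_set Ioc_ae_eq_Icc).symm
  rw [h1]
  have h2 : ∫⁻ t in Ioc (0:ℝ) a, ENNReal.ofReal (|t| ^ (-α))
      = ∫⁻ t in Ioc (0:ℝ) a, ENNReal.ofReal (t ^ (-α)) := by
    refine setLIntegral_congr_fun measurableSet_Ioc (fun t ht => ?_)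
    rw [abs_of_pos ht.1]
  rw [h2]
  have hint : IntegrableOn (fun t : ℝ => t ^ (-α)) (Ioc 0 a) volume :=
    (intervalIntegral.intervalIntegrable_rpow' (by linarith)).1
  have hpos : 0 ≤ᵐ[volume.restrict (Ioc (0:ℝ) a)] fun t : ℝ => t ^ (-α) :=
    (ae_restrict_iff' measurableSet_Ioc).2
      (ae_of_all _ fun t ht => Real.rpow_nonneg ht.1.le _)
  rw [← ofReal_integral_eq_lintegral_ofReal hint hpos]
  have hval : ∫ t in Ioc (0:ℝ) a, t ^ (-α) = a ^ (1 - α) / (1 - α) := by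
    rw [← intervalIntegral.integral_of_le ha,
      integral_rpow (Or.inl (by linarith : (-1:ℝ) < -α)),
      Real.zero_rpow (by linarith : -α + 1 ≠ 0),
      show -α + 1 = 1 - α by ring, sub_zero]
  rw [hval]

lemma near_bound (α : ℝ) (hα1 : α < 1) (c a : ℝ) (ha : 0 ≤ a) :
    ∫⁻ y in Icc (c - a) (c + a), ENNReal.ofReal (|c - y| ^ (-α)) ≤
      ENNReal.ofReal (2 * (a ^ (1 - α) / (1 - α))) := by
  have hmp : MeasurePreserving (fun t : ℝ => c - t) volume volume :=
    Measure.measurePreserving_sub_left volume c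
  have hemb : MeasurableEmbedding (fun t : ℝ => c - t) :=
    (MeasurableEquiv.subLeft c).measurableEmbedding
  have key : ∫⁻ y in Icc (c - a) (c + a), ENNReal.ofReal (|c - y| ^ (-α))
      = ∫⁻ t in Icc (-a) a, ENNReal.ofReal (|t| ^ (-α)) := by
    have h := hmp.setLIntegral_comp_preimage_emb hemb
      (fun y => ENNReal.ofReal (|c - y| ^ (-α))) (Icc (c - a) (c + a))
    rw [preimage_const_sub_Icc, show c - (c + a) = -a by ring,
      show c - (c - a) = a by ring] at h
    rw [← h]
    exact setLIntegral_congr_fun measurableSet_Icc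
      (fun t _ => by rw [show c - (c - t) = t by ring])
  rw [key]
  have hneg : ∫⁻ t in Icc (-a) (0:ℝ), ENNReal.ofReal (|t| ^ (-α))
      = ∫⁻ t in Icc (0:ℝ) a, ENNReal.ofReal (|t| ^ (-α)) := by
    have hmp2 : MeasurePreserving (fun t : ℝ => -t) volume volume :=
      Measure.measurePreserving_neg volume
    have hemb2 : MeasurableEmbedding (fun t : ℝ => -t) :=
      (MeasurableEquiv.neg ℝ).measurableEmbedding
    have h := hmp2.setLIntegral_comp_preimage_emb hemb2
      (fun t => ENNReal.ofReal (|t| ^ (-α))) (Icc (-a) (0:ℝ))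
    have hpre : (fun t : ℝ => -t) ⁻¹' Icc (-a) (0:ℝ) = Icc (0:ℝ) a := by
      ext t; simp [neg_le, le_neg, and_comm]
    rw [hpre] at h
    rw [← h]
    exact setLIntegral_congr_fun measurableSet_Icc
      (fun t _ => by rw [abs_neg])
  calc ∫⁻ t in Icc (-a) a, ENNReal.ofReal (|t| ^ (-α))
      ≤ ∫⁻ t in Icc (-a) (0:ℝ) ∪ Icc (0:ℝ) a, ENNReal.ofReal (|t| ^ (-α)) := by
        refine lintegral_mono_set fun t ht => ?_
        rcases le_total t 0 with h | h
        · exact Or.inl ⟨ht.1, h⟩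
        · exact Or.inr ⟨h, ht.2⟩
    _ ≤ (∫⁻ t in Icc (-a) (0:ℝ), ENNReal.ofReal (|t| ^ (-α)))
        + ∫⁻ t in Icc (0:ℝ) a, ENNReal.ofReal (|t| ^ (-α)) := lintegral_union_le _ _ _
    _ ≤ ENNReal.ofReal (a ^ (1 - α) / (1 - α)) + ENNReal.ofReal (a ^ (1 - α) / (1 - α)) := by
        rw [hneg]; exact add_le_add (core_int α hα1 a ha) (core_int α hα1 a ha)
    _ = ENNReal.ofReal (2 * (a ^ (1 - α) / (1 - α))) := by
        rw [← ENNReal.ofReal_add (div_nonneg (Real.rpow_nonneg ha _) (by linarith))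
          (div_nonneg (Real.rpow_nonneg ha _) (by linarith)), two_mul]

set_option maxHeartbeats 1000000 in
/-- Cap-type refinement for `B(χ_E, χ_E)`: there are `C < ∞` and `γ ∈ (0,1)`
such that the double integral of `|x-y|^{-α}` over `E × E` is controlled by
`|E|^{2/p}` times a power of the maximal density of `E` on intervals. -/
theorem stmt_8 (α p : ℝ) (hα0 : 0 < α) (hα1 : α < 1) (hp : p = 2 / (2 - α)) :
    ∃ (C : ℝ) (γ : ℝ), 0 < C ∧ γ ∈ Set.Ioo (0 : ℝ) 1 ∧
      ∀ E : Set ℝ, MeasurableSet E → volume E < ⊤ →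
        ∫⁻ x in E, ∫⁻ y in E, ENNReal.ofReal (|x - y| ^ (-α)) ≤
          ENNReal.ofReal (C * (volume E).toReal ^ (2 / p) *
            (⨆ q : ℝ × ℝ,
              (volume (E ∩ Icc q.1 q.2)).toReal
                / ((volume E).toReal + (volume (Icc q.1 q.2)).toReal)) ^ γ) := by
  have h1α : (0:ℝ) < 1 - α := by linarith
  have h2α : (0:ℝ) < 2 - α := by linarith
  have h2p : 2 / p = 2 - α := by rw [hp]; field_simp
  refine ⟨2 / (1 - α) + 4, min α (1 - α) / 2,
    by have := div_pos (by norm_num : (0:ℝ) < 2) h1α; linarith,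
    ⟨by have := lt_min hα0 h1α; linarith,
     by have : min α (1 - α) ≤ α := min_le_left _ _; linarith⟩, ?_⟩
  set γ : ℝ := min α (1 - α) / 2 with hγdef
  have hγle1 : γ ≤ (1 - α) / 2 := by
    have : min α (1 - α) ≤ 1 - α := min_le_right _ _
    rw [hγdef]; linarith
  have hγle2 : γ ≤ α / 2 := by
    have : min α (1 - α) ≤ α := min_le_left _ _
    rw [hγdef]; linarith
  intro E hE hEfin
  by_cases h0 : volume E = 0
  · rw [setLIntegral_measure_zero _ _ h0]
    exact zero_le
  set m : ℝ := (volume E).toReal with hmdef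
  have hm0 : 0 ≤ m := ENNReal.toReal_nonneg
  have hm : 0 < m := ENNReal.toReal_pos h0 hEfin.ne
  have hr_nonneg : ∀ q : ℝ × ℝ, 0 ≤ (volume (E ∩ Icc q.1 q.2)).toReal /
      (m + (volume (Icc q.1 q.2)).toReal) :=
    fun q => div_nonneg ENNReal.toReal_nonneg
      (add_nonneg hm0 ENNReal.toReal_nonneg)
  have hr_le : ∀ q : ℝ × ℝ, (volume (E ∩ Icc q.1 q.2)).toReal /
      (m + (volume (Icc q.1 q.2)).toReal) ≤ 1 := by
    intro q
    apply div_le_one_of_le₀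
    · calc (volume (E ∩ Icc q.1 q.2)).toReal
          ≤ (volume (Icc q.1 q.2)).toReal :=
            ENNReal.toReal_mono measure_Icc_lt_top.ne (measure_mono inter_subset_right)
        _ ≤ m + (volume (Icc q.1 q.2)).toReal := le_add_of_nonneg_left hm0
    · exact add_nonneg hm0 ENNReal.toReal_nonneg
  have hbdd : BddAbove (range fun q : ℝ × ℝ => (volume (E ∩ Icc q.1 q.2)).toReal /
      (m + (volume (Icc q.1 q.2)).toReal)) := ⟨1, by rintro _ ⟨q, rfl⟩; exact hr_le q⟩
  set D : ℝ := ⨆ q : ℝ × ℝ, (volume (E ∩ Icc q.1 q.2)).toReal /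
      (m + (volume (Icc q.1 q.2)).toReal) with hDdef
  have hD1 : D ≤ 1 := ciSup_le hr_le
  have hD0 : 0 ≤ D := Real.iSup_nonneg hr_nonneg
  -- D is positive
  obtain ⟨n, hn⟩ : ∃ n : ℕ, volume (E ∩ Icc (-(n:ℝ)) (n:ℝ)) ≠ 0 := by
    by_contra hc
    push_neg at hc
    apply h0
    have hEU : E = ⋃ n : ℕ, E ∩ Icc (-(n:ℝ)) (n:ℝ) := by
      ext x
      simp only [mem_iUnion, mem_inter_iff, mem_Icc]
      constructor
      · intro hx
        refine ⟨⌈|x|⌉₊, hx, ?_, ?_⟩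
        · have h1 : |x| ≤ (⌈|x|⌉₊ : ℝ) := Nat.le_ceil _
          linarith [neg_abs_le x]
        · have h1 : |x| ≤ (⌈|x|⌉₊ : ℝ) := Nat.le_ceil _
          linarith [le_abs_self x]
      · rintro ⟨n, hx, _⟩; exact hx
    rw [hEU]
    exact measure_iUnion_null fun n => hc n
  have hDpos : 0 < D := by
    have hfinn : volume (E ∩ Icc (-(n:ℝ)) (n:ℝ)) ≠ ⊤ :=
      (lt_of_le_of_lt (measure_mono inter_subset_left) hEfin).ne
    have hnum : 0 < (volume (E ∩ Icc (-(n:ℝ)) (n:ℝ))).toReal := ENNReal.toReal_pos hn hfinn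
    have hden : 0 < m + (volume (Icc (-(n:ℝ)) (n:ℝ))).toReal :=
      add_pos_of_pos_of_nonneg hm ENNReal.toReal_nonneg
    have hq : (0:ℝ) < (volume (E ∩ Icc ((-(n:ℝ), (n:ℝ)) : ℝ × ℝ).1 ((-(n:ℝ), (n:ℝ)) : ℝ × ℝ).2)).toReal /
        (m + (volume (Icc ((-(n:ℝ), (n:ℝ)) : ℝ × ℝ).1 ((-(n:ℝ), (n:ℝ)) : ℝ × ℝ).2)).toReal) :=
      div_pos hnum hden
    exact lt_of_lt_of_le hq (le_ciSup hbdd _)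
  -- key density bound
  have hkey : ∀ x T : ℝ, 0 < T →
      volume (E ∩ Icc (x - T) (x + T)) ≤ ENNReal.ofReal (D * (m + 2 * T)) := by
    intro x T hT
    have hIcc : volume (Icc (x - T) (x + T)) = ENNReal.ofReal (2 * T) := by
      rw [Real.volume_Icc]; congr 1; ring
    have h : (volume (E ∩ Icc (x - T) (x + T))).toReal /
        (m + (volume (Icc (x - T) (x + T))).toReal) ≤ D := le_ciSup hbdd (x - T, x + T)
    rw [hIcc, ENNReal.toReal_ofReal (by linarith : (0:ℝ) ≤ 2 * T)] at h
    have hfin : volume (E ∩ Icc (x - T) (x + T)) ≠ ⊤ :=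
      (lt_of_le_of_lt (measure_mono inter_subset_left) hEfin).ne
    have h2 : (volume (E ∩ Icc (x - T) (x + T))).toReal ≤ D * (m + 2 * T) := by
      rw [div_le_iff₀ (by linarith)] at h
      linarith
    calc volume (E ∩ Icc (x - T) (x + T))
        = ENNReal.ofReal (volume (E ∩ Icc (x - T) (x + T))).toReal :=
          (ENNReal.ofReal_toReal hfin).symm
      _ ≤ ENNReal.ofReal (D * (m + 2 * T)) := ENNReal.ofReal_le_ofReal h2
  -- scales
  set a : ℝ := m * D ^ ((1:ℝ)/2) with hadef
  set T : ℝ := m * D ^ (-((1:ℝ)/2)) with hTdef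
  have ha : 0 < a := mul_pos hm (Real.rpow_pos_of_pos hDpos _)
  have hT : 0 < T := mul_pos hm (Real.rpow_pos_of_pos hDpos _)
  have hmT : m ≤ T := by
    have h1 : (1:ℝ) ≤ D ^ (-((1:ℝ)/2)) :=
      Real.one_le_rpow_of_pos_of_le_one_of_nonpos hDpos hD1 (by norm_num)
    calc m = m * 1 := (mul_one m).symm
      _ ≤ m * D ^ (-((1:ℝ)/2)) := mul_le_mul_of_nonneg_left h1 hm0
  set Kn : ℝ := 2 * (a ^ (1 - α) / (1 - α)) with hKndef
  set Km : ℝ := a ^ (-α) * (D * (m + 2 * T)) with hKmdef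
  set Kf : ℝ := T ^ (-α) * m with hKfdef
  have hKn0 : 0 ≤ Kn := by
    have := div_nonneg (Real.rpow_nonneg ha.le (1 - α)) h1α.le
    rw [hKndef]; linarith
  have hKm0 : 0 ≤ Km :=
    mul_nonneg (Real.rpow_nonneg ha.le _) (mul_nonneg hD0 (by linarith))
  have hKf0 : 0 ≤ Kf := mul_nonneg (Real.rpow_nonneg hT.le _) hm0
  -- inner bound
  have hinner : ∀ x : ℝ, ∫⁻ y in E, ENNReal.ofReal (|x - y| ^ (-α)) ≤
      ENNReal.ofReal (Kn + Km + Kf) := by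
    intro x
    have hsub : E ⊆ (Icc (x - a) (x + a) ∪ ((E ∩ Icc (x - T) (x + T)) \ Icc (x - a) (x + a)))
        ∪ (E \ Icc (x - T) (x + T)) := by
      intro y hy
      by_cases hy1 : y ∈ Icc (x - a) (x + a)
      · exact Or.inl (Or.inl hy1)
      by_cases hy2 : y ∈ Icc (x - T) (x + T)
      · exact Or.inl (Or.inr ⟨⟨hy, hy2⟩, hy1⟩)
      · exact Or.inr ⟨hy, hy2⟩
    have hB : ∫⁻ y in (E ∩ Icc (x - T) (x + T)) \ Icc (x - a) (x + a),
        ENNReal.ofReal (|x - y| ^ (-α)) ≤ ENNReal.ofReal Km := by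
      have hBm : MeasurableSet ((E ∩ Icc (x - T) (x + T)) \ Icc (x - a) (x + a)) :=
        (hE.inter measurableSet_Icc).diff measurableSet_Icc
      calc ∫⁻ y in (E ∩ Icc (x - T) (x + T)) \ Icc (x - a) (x + a),
            ENNReal.ofReal (|x - y| ^ (-α))
          ≤ ∫⁻ _ in (E ∩ Icc (x - T) (x + T)) \ Icc (x - a) (x + a),
            ENNReal.ofReal (a ^ (-α)) := by
            refine setLIntegral_mono' hBm fun y hy => ENNReal.ofReal_le_ofReal ?_
            have hay : a ≤ |x - y| := by
              have h1 := hy.2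
              simp only [mem_Icc, not_and_or, not_le] at h1
              rcases h1 with h1 | h1
              · calc a ≤ x - y := by linarith
                  _ ≤ |x - y| := le_abs_self _
              · calc a ≤ y - x := by linarith
                  _ ≤ |y - x| := le_abs_self _
                  _ = |x - y| := abs_sub_comm _ _
            exact Real.rpow_le_rpow_of_nonpos ha hay (by linarith)
        _ = ENNReal.ofReal (a ^ (-α)) *
            volume ((E ∩ Icc (x - T) (x + T)) \ Icc (x - a) (x + a)) :=
            setLIntegral_const _ _
        _ ≤ ENNReal.ofReal (a ^ (-α)) * ENNReal.ofReal (D * (m + 2 * T)) :=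
            mul_le_mul_right (le_trans (measure_mono diff_subset) (hkey x T hT)) _
        _ = ENNReal.ofReal Km := by
            rw [← ENNReal.ofReal_mul (Real.rpow_nonneg ha.le _)]
    have hC : ∫⁻ y in E \ Icc (x - T) (x + T),
        ENNReal.ofReal (|x - y| ^ (-α)) ≤ ENNReal.ofReal Kf := by
      have hCm : MeasurableSet (E \ Icc (x - T) (x + T)) := hE.diff measurableSet_Icc
      calc ∫⁻ y in E \ Icc (x - T) (x + T), ENNReal.ofReal (|x - y| ^ (-α))
          ≤ ∫⁻ _ in E \ Icc (x - T) (x + T), ENNReal.ofReal (T ^ (-α)) := by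
            refine setLIntegral_mono' hCm fun y hy => ENNReal.ofReal_le_ofReal ?_
            have hay : T ≤ |x - y| := by
              have h1 := hy.2
              simp only [mem_Icc, not_and_or, not_le] at h1
              rcases h1 with h1 | h1
              · calc T ≤ x - y := by linarith
                  _ ≤ |x - y| := le_abs_self _
              · calc T ≤ y - x := by linarith
                  _ ≤ |y - x| := le_abs_self _
                  _ = |x - y| := abs_sub_comm _ _
            exact Real.rpow_le_rpow_of_nonpos hT hay (by linarith)
        _ = ENNReal.ofReal (T ^ (-α)) * volume (E \ Icc (x - T) (x + T)) :=
            setLIntegral_const _ _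
        _ ≤ ENNReal.ofReal (T ^ (-α)) * ENNReal.ofReal m := by
            refine mul_le_mul_right ?_ _
            calc volume (E \ Icc (x - T) (x + T)) ≤ volume E := measure_mono diff_subset
              _ = ENNReal.ofReal m := (ENNReal.ofReal_toReal hEfin.ne).symm
        _ = ENNReal.ofReal Kf := by
            rw [← ENNReal.ofReal_mul (Real.rpow_nonneg hT.le _)]
    calc ∫⁻ y in E, ENNReal.ofReal (|x - y| ^ (-α))
        ≤ ∫⁻ y in (Icc (x - a) (x + a) ∪ ((E ∩ Icc (x - T) (x + T)) \ Icc (x - a) (x + a)))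
            ∪ (E \ Icc (x - T) (x + T)), ENNReal.ofReal (|x - y| ^ (-α)) :=
          lintegral_mono_set hsub
      _ ≤ (∫⁻ y in Icc (x - a) (x + a) ∪ ((E ∩ Icc (x - T) (x + T)) \ Icc (x - a) (x + a)),
            ENNReal.ofReal (|x - y| ^ (-α)))
          + ∫⁻ y in E \ Icc (x - T) (x + T), ENNReal.ofReal (|x - y| ^ (-α)) :=
          lintegral_union_le _ _ _
      _ ≤ ((∫⁻ y in Icc (x - a) (x + a), ENNReal.ofReal (|x - y| ^ (-α)))
          + ∫⁻ y in (E ∩ Icc (x - T) (x + T)) \ Icc (x - a) (x + a),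
            ENNReal.ofReal (|x - y| ^ (-α)))
          + ∫⁻ y in E \ Icc (x - T) (x + T), ENNReal.ofReal (|x - y| ^ (-α)) :=
          add_le_add_left (lintegral_union_le _ _ _) _
      _ ≤ (ENNReal.ofReal Kn + ENNReal.ofReal Km) + ENNReal.ofReal Kf :=
          add_le_add (add_le_add (near_bound α hα1 x a ha.le) hB) hC
      _ = ENNReal.ofReal (Kn + Km + Kf) := by
          rw [← ENNReal.ofReal_add hKn0 hKm0, ← ENNReal.ofReal_add (by linarith) hKf0]
  -- arithmetic
  have P1 : m ^ (-α) * m = m ^ (1 - α) := by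
    have h := Real.rpow_add hm (-α) 1
    rw [Real.rpow_one] at h
    rw [← h, neg_add_eq_sub]
  have P1' : m ^ (1 - α) * m = m ^ (2 - α) := by
    have h := Real.rpow_add hm (1 - α) 1
    rw [Real.rpow_one] at h
    rw [← h, show 1 - α + 1 = 2 - α by ring]
  have e1 : a ^ (1 - α) = m ^ (1 - α) * D ^ ((1:ℝ)/2 * (1 - α)) := by
    rw [hadef, Real.mul_rpow hm0 (Real.rpow_nonneg hD0 _), ← Real.rpow_mul hD0]
  have e2 : a ^ (-α) = m ^ (-α) * D ^ ((1:ℝ)/2 * (-α)) := by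
    rw [hadef, Real.mul_rpow hm0 (Real.rpow_nonneg hD0 _), ← Real.rpow_mul hD0]
  have e3 : T ^ (-α) = m ^ (-α) * D ^ (-((1:ℝ)/2) * (-α)) := by
    rw [hTdef, Real.mul_rpow hm0 (Real.rpow_nonneg hD0 _), ← Real.rpow_mul hD0]
  have P2 : D ^ ((1:ℝ)/2 * (-α)) * (D * D ^ (-((1:ℝ)/2))) = D ^ ((1 - α)/2) := by
    nth_rw 2 [← Real.rpow_one D]
    rw [← Real.rpow_add hDpos, ← Real.rpow_add hDpos]
    congr 1; ring
  have hdm : ∀ e : ℝ, γ ≤ e → D ^ e ≤ D ^ γ := fun e he =>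
    Real.rpow_le_rpow_of_exponent_ge hDpos hD1 he
  have hmn : 0 ≤ m ^ (1 - α) := Real.rpow_nonneg hm0 _
  have hDγ : 0 ≤ D ^ γ := Real.rpow_nonneg hD0 _
  have b1 : Kn ≤ 2 / (1 - α) * (m ^ (1 - α) * D ^ γ) := by
    rw [hKndef, e1]
    have h1 : D ^ ((1:ℝ)/2 * (1 - α)) ≤ D ^ γ :=
      hdm _ (by rw [show (1:ℝ)/2 * (1 - α) = (1 - α)/2 by ring]; exact hγle1)
    have h2 : m ^ (1 - α) * D ^ ((1:ℝ)/2 * (1 - α)) ≤ m ^ (1 - α) * D ^ γ :=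
      mul_le_mul_of_nonneg_left h1 hmn
    calc 2 * (m ^ (1 - α) * D ^ ((1:ℝ)/2 * (1 - α)) / (1 - α))
        = 2 / (1 - α) * (m ^ (1 - α) * D ^ ((1:ℝ)/2 * (1 - α))) := by ring
      _ ≤ 2 / (1 - α) * (m ^ (1 - α) * D ^ γ) :=
          mul_le_mul_of_nonneg_left h2 (div_nonneg (by norm_num) h1α.le)
  have b2 : Km ≤ 3 * (m ^ (1 - α) * D ^ γ) := by
    have step1 : Km ≤ a ^ (-α) * (D * (3 * T)) := by
      rw [hKmdef]
      refine mul_le_mul_of_nonneg_left ?_ (Real.rpow_nonneg ha.le _)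
      refine mul_le_mul_of_nonneg_left ?_ hD0
      linarith
    have step2 : a ^ (-α) * (D * (3 * T)) = 3 * (m ^ (1 - α) * D ^ ((1 - α)/2)) := by
      rw [e2, hTdef]
      calc m ^ (-α) * D ^ ((1:ℝ)/2 * (-α)) * (D * (3 * (m * D ^ (-((1:ℝ)/2)))))
          = 3 * ((m ^ (-α) * m) * (D ^ ((1:ℝ)/2 * (-α)) * (D * D ^ (-((1:ℝ)/2))))) := by ring
        _ = 3 * (m ^ (1 - α) * D ^ ((1 - α)/2)) := by rw [P1, P2]
    rw [step2] at step1
    have h1 : D ^ ((1 - α)/2) ≤ D ^ γ := hdm _ hγle1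
    have h2 := mul_le_mul_of_nonneg_left h1 hmn
    linarith
  have b3 : Kf ≤ 1 * (m ^ (1 - α) * D ^ γ) := by
    rw [hKfdef, e3, one_mul]
    have heq : m ^ (-α) * D ^ (-((1:ℝ)/2) * (-α)) * m = m ^ (1 - α) * D ^ (-((1:ℝ)/2) * (-α)) := by
      rw [← P1]; ring
    rw [heq]
    have h1 : D ^ (-((1:ℝ)/2) * (-α)) ≤ D ^ γ :=
      hdm _ (by rw [show -((1:ℝ)/2) * (-α) = α/2 by ring]; exact hγle2)
    exact mul_le_mul_of_nonneg_left h1 hmn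
  have harith : (Kn + Km + Kf) * m ≤ (2 / (1 - α) + 4) * m ^ (2 / p) * D ^ γ := by
    rw [h2p]
    have hsum : Kn + Km + Kf ≤ (2 / (1 - α) + 4) * (m ^ (1 - α) * D ^ γ) := by
      have hexp : (2 / (1 - α) + 4) * (m ^ (1 - α) * D ^ γ)
          = 2 / (1 - α) * (m ^ (1 - α) * D ^ γ) + 3 * (m ^ (1 - α) * D ^ γ)
            + 1 * (m ^ (1 - α) * D ^ γ) := by ring
      rw [hexp]
      linarith
    calc (Kn + Km + Kf) * m ≤ (2 / (1 - α) + 4) * (m ^ (1 - α) * D ^ γ) * m :=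
          mul_le_mul_of_nonneg_right hsum hm0
      _ = (2 / (1 - α) + 4) * (m ^ (1 - α) * m) * D ^ γ := by ring
      _ = (2 / (1 - α) + 4) * m ^ (2 - α) * D ^ γ := by rw [P1']
  calc ∫⁻ x in E, ∫⁻ y in E, ENNReal.ofReal (|x - y| ^ (-α))
      ≤ ∫⁻ _ in E, ENNReal.ofReal (Kn + Km + Kf) := lintegral_mono fun x => hinner x
    _ = ENNReal.ofReal (Kn + Km + Kf) * volume E := setLIntegral_const _ _
    _ = ENNReal.ofReal (Kn + Km + Kf) * ENNReal.ofReal m := by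
        rw [← ENNReal.ofReal_toReal hEfin.ne]
    _ = ENNReal.ofReal ((Kn + Km + Kf) * m) := by
        rw [← ENNReal.ofReal_mul (by linarith)]
    _ ≤ ENNReal.ofReal ((2 / (1 - α) + 4) * m ^ (2 / p) * D ^ γ) :=
        ENNReal.ofReal_le_ofReal harith
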